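/- arXiv:0804.0608 — 3 statements merged into one kernel-verified Lean document; each statement's English description precedes it below -/
import Mathlib

section
/- Let A be a finite-dimensional commutative Frobenius algebra over a field k that is semi-simple with a complete system of orthogonal idempotents e_1,…,e_n forming a basis, and set λ_i := ⟨e_i, 1⟩. Then the Euler element of A equals Σ_i λ_i^{-1} e_i. In particular, the Euler element is invertible. -/
/-- For a semi-simple commutative Frobenius algebra with a
complete system of orthogonal idempotents `ε₁,…,εₙ` forming a basis and
`λᵢ = ⟨εᵢ,1⟩`, the Euler element `e = ∑ xᵢ * yᵢ` equals `∑ λᵢ⁻¹ • εᵢ`;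
in particular it is invertible. -/
theorem stmt_2 {k A : Type} [Field k] [CommRing A] [Algebra k A]
    (B : A →ₗ[k] A →ₗ[k] k)
    (hinv : ∀ a b c : A, B (a * b) c = B a (b * c))
    (hnd : ∀ a : A, (∀ b : A, B a b = 0) → a = 0)
    {n : ℕ}
    (ε : Module.Basis (Fin n) k A)
    (hidem : ∀ i j, ε i * ε j = if i = j then ε i else 0)
    (hone : ∑ i, ε i = 1)
    (hlam : ∀ i, B (ε i) 1 ≠ 0)
    (x : Module.Basis (Fin n) k A) (y : Module.Basis (Fin n) k A)
    (hdual : ∀ i j, B (x i) (y j) = if i = j then 1 else 0) :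
    (∑ i, x i * y i = ∑ i, (B (ε i) 1)⁻¹ • ε i) ∧
    IsUnit (∑ i, x i * y i) := by
  set lam : Fin n → k := fun i => B (ε i) 1 with hlamdef
  -- symmetry of B
  have hsymm : ∀ a b : A, B a b = B b a := by
    intro a b
    calc B a b = B (a * b) 1 := by rw [hinv, mul_one]
    _ = B (b * a) 1 := by rw [mul_comm]
    _ = B b a := by rw [hinv, mul_one]
  -- B on idempotents
  have hεε : ∀ i j, B (ε i) (ε j) = if i = j then lam i else 0 := by
    intro i j
    have : B (ε i) (ε j) = B (ε i * ε j) 1 := by rw [hinv, mul_one]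
    rw [this, hidem]
    split
    · rfl
    · simp
  -- expansion w.r.t. dual bases x,y : ∀ a, ∑ i, B a (y i) • x i = a
  have expandX : ∀ a : A, ∑ i, B a (y i) • x i = a := by
    intro a
    conv_rhs => rw [← x.sum_repr a]
    refine Finset.sum_congr rfl fun i _ => ?_
    congr 1
    conv_lhs => rw [← x.sum_repr a]
    rw [map_sum]
    simp only [map_smul, LinearMap.smul_apply, LinearMap.sum_apply]
    simp [hdual, smul_eq_mul]
  -- expansion w.r.t. ε : ∀ a, ∑ j, ((lam j)⁻¹ * B (ε j) a) • ε j = a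
  have expandE : ∀ a : A, ∑ j, ((lam j)⁻¹ * B (ε j) a) • ε j = a := by
    intro a
    conv_rhs => rw [← ε.sum_repr a]
    refine Finset.sum_congr rfl fun j _ => ?_
    congr 1
    conv_lhs => rw [← ε.sum_repr a]
    rw [map_sum]
    simp only [map_smul, smul_eq_mul]
    rw [Finset.mul_sum]
    rw [Finset.sum_eq_single j]
    · rw [hεε, if_pos rfl]
      rw [mul_comm ((lam j)⁻¹)]
      exact mul_inv_cancel_right₀ (hlam j) _
    · intro b _ hb
      rw [hεε, if_neg (Ne.symm hb)]
      ring
    · intro h; exact absurd (Finset.mem_univ j) h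
  -- the key inner sum: ∑ i, B (ε l) (x i) * B (ε l) (y i) = lam l
  have hkey : ∀ l, ∑ i, B (ε l) (x i) * B (ε l) (y i) = lam l := by
    intro l
    have h1 : B (ε l) (∑ i, B (ε l) (y i) • x i) = B (ε l) (ε l) := by
      rw [expandX (ε l)]
    rw [hεε, if_pos rfl] at h1
    rw [map_sum] at h1
    simp only [map_smul, smul_eq_mul] at h1
    rw [← h1]
    refine Finset.sum_congr rfl fun i _ => ?_
    ring
  -- main equality
  have hmain : ∑ i, x i * y i = ∑ i, (lam i)⁻¹ • ε i := by
    have rewrite_term : ∀ i : Fin n,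
        x i * y i = ∑ l, ((lam l)⁻¹ * B (ε l) (x i) * ((lam l)⁻¹ * B (ε l) (y i))) • ε l := by
      intro i
      conv_lhs => rw [← expandE (x i), ← expandE (y i)]
      rw [Finset.sum_mul_sum]
      rw [Finset.sum_comm]
      refine Finset.sum_congr rfl fun l _ => ?_
      rw [Finset.sum_eq_single l]
      · rw [smul_mul_smul_comm, hidem, if_pos rfl]
      · intro b _ hb
        rw [smul_mul_smul_comm, hidem, if_neg hb, smul_zero]
      · intro h; exact absurd (Finset.mem_univ l) h
    calc ∑ i, x i * y i
        = ∑ i, ∑ l, ((lam l)⁻¹ * B (ε l) (x i) * ((lam l)⁻¹ * B (ε l) (y i))) • ε l :=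
          Finset.sum_congr rfl fun i _ => rewrite_term i
      _ = ∑ l, (∑ i, (lam l)⁻¹ * B (ε l) (x i) * ((lam l)⁻¹ * B (ε l) (y i))) • ε l := by
          rw [Finset.sum_comm]
          exact Finset.sum_congr rfl fun l _ => (Finset.sum_smul).symm
      _ = ∑ l, (lam l)⁻¹ • ε l := by
          refine Finset.sum_congr rfl fun l _ => ?_
          congr 1
          have : ∑ i, (lam l)⁻¹ * B (ε l) (x i) * ((lam l)⁻¹ * B (ε l) (y i))
              = (lam l)⁻¹ * (lam l)⁻¹ * ∑ i, B (ε l) (x i) * B (ε l) (y i) := by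
            rw [Finset.mul_sum]
            exact Finset.sum_congr rfl fun i _ => by ring
          rw [this, hkey]
          field_simp
  refine ⟨hmain, ?_⟩
  rw [hmain]
  refine IsUnit.of_mul_eq_one (∑ i, lam i • ε i) ?_
  rw [Finset.sum_mul_sum]
  have : ∀ i : Fin n, ∑ j, (lam i)⁻¹ • ε i * lam j • ε j = ε i := by
    intro i
    rw [Finset.sum_eq_single i]
    · rw [smul_mul_smul_comm, hidem, if_pos rfl, inv_mul_cancel₀ (hlam i), one_smul]
    · intro b _ hb
      rw [smul_mul_smul_comm, hidem, if_neg (Ne.symm hb), smul_zero]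
    · intro h; exact absurd (Finset.mem_univ i) h
  rw [Finset.sum_congr rfl fun i _ => this i, hone]
end

section
/- Let A be a finite-dimensional commutative Frobenius algebra. The Euler element e of A is invertible if and only if A is semi-simple, provided k is algebraically closed of characteristic zero. -/
set_option linter.unusedSectionVars false

section Aux

variable {k A : Type} [Field k] [CommRing A] [Algebra k A]
    (B : A →ₗ[k] A →ₗ[k] k)
    {n : ℕ} (x : Module.Basis (Fin n) k A) (y : Module.Basis (Fin n) k A)

lemma stmt6_aux_repr (hdual : ∀ i j, B (x i) (y j) = if i = j then 1 else 0)
    (v : A) (i : Fin n) : B v (y i) = x.repr v i := by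
  conv_lhs => rw [← x.sum_repr v]
  rw [map_sum]
  simp only [map_smul, LinearMap.sum_apply, LinearMap.smul_apply, hdual, smul_eq_mul,
    mul_ite, mul_one, mul_zero]
  simp

lemma stmt6_aux_trace (hinv : ∀ a b c : A, B (a * b) c = B a (b * c))
    (hdual : ∀ i j, B (x i) (y j) = if i = j then 1 else 0) (a : A) :
    LinearMap.trace k A (LinearMap.mulLeft k a) = B a (∑ i, x i * y i) := by
  classical
  rw [LinearMap.trace_eq_matrix_trace k x, Matrix.trace]
  simp only [Matrix.diag_apply, LinearMap.toMatrix_apply, LinearMap.mulLeft_apply]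
  rw [map_sum]
  refine Finset.sum_congr rfl fun i _ => ?_
  rw [← stmt6_aux_repr B x y hdual, ← hinv]

end Aux

/-- Over an algebraically closed field of characteristic zero, the
Euler element `e = ∑ xᵢ * yᵢ` of a finite-dimensional commutative Frobenius
algebra is invertible if and only if the algebra is semi-simple (its Jacobson
radical vanishes). -/
theorem stmt_6 {k A : Type} [Field k] [IsAlgClosed k] [CharZero k]
    [CommRing A] [Algebra k A]
    (B : A →ₗ[k] A →ₗ[k] k)
    (hinv : ∀ a b c : A, B (a * b) c = B a (b * c))
    (hnd : ∀ a : A, (∀ b : A, B a b = 0) → a = 0)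
    {n : ℕ} (x : Module.Basis (Fin n) k A) (y : Module.Basis (Fin n) k A)
    (hdual : ∀ i j, B (x i) (y j) = if i = j then 1 else 0) :
    IsUnit (∑ i, x i * y i) ↔ (⊥ : Ideal A).jacobson = ⊥ := by
  classical
  set e : A := ∑ i, x i * y i with he
  haveI : Module.Finite k A := Module.Finite.of_basis x
  haveI : IsArtinianRing A := isArtinian_of_tower k inferInstance
  constructor
  · -- e unit ⇒ Jacobson radical is ⊥
    intro hu
    refine le_antisymm ?_ bot_le
    intro a ha
    rw [Ideal.mem_bot]
    -- a is nilpotent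
    obtain ⟨m, hm⟩ := IsArtinianRing.isNilpotent_jacobson_bot (R := A)
    have hanil : IsNilpotent a := by
      refine ⟨m, ?_⟩
      have := Ideal.pow_mem_pow ha m
      rw [hm] at this
      simpa using this
    -- hence B (a * b) e = 0 for all b
    have htr : ∀ b : A, B (a * b) e = 0 := by
      intro b
      have hab : IsNilpotent (a * b) := (Commute.all a b).isNilpotent_mul_right hanil
      have hnl : IsNilpotent (LinearMap.mulLeft k (a * b)) := by
        obtain ⟨m', hm'⟩ := hab
        exact ⟨m', by rw [LinearMap.pow_mulLeft, hm', LinearMap.mulLeft_zero_eq_zero]⟩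
      have := LinearMap.isNilpotent_trace_of_isNilpotent hnl
      have h0 : LinearMap.trace k A (LinearMap.mulLeft k (a * b)) = 0 := this.eq_zero
      rw [stmt6_aux_trace B x y hinv hdual] at h0
      exact h0
    -- now use invertibility of e and nondegeneracy
    obtain ⟨v, hv⟩ := hu.exists_right_inv
    refine hnd a fun d => ?_
    have h1 := htr (d * v)
    rw [hinv] at h1
    have : d * v * e = d := by rw [mul_assoc, mul_comm v e, hv, mul_one]
    rwa [this] at h1
  · -- Jacobson radical ⊥ ⇒ e unit
    intro hj
    by_contra hu
    -- A is reduced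
    haveI : IsReduced A := by
      constructor
      intro a ha
      have : a ∈ (⊥ : Ideal A).jacobson :=
        Ideal.radical_le_jacobson (mem_nilradical.mpr ha)
      rw [hj] at this
      simpa using this
    -- maximal ideal containing e
    obtain ⟨M, hM, heM⟩ := exists_max_ideal_of_mem_nonunits hu
    haveI := (IsArtinianRing.setOfPred_isMaximal_finite (R := A)).to_subtype
    set Φ := IsArtinianRing.equivPi A with hΦ
    set idx : MaximalSpectrum A := ⟨M, hM⟩ with hidx
    set s : ∀ I : MaximalSpectrum A, A ⧸ I.asIdeal :=
      Pi.single idx (Ideal.Quotient.mk M 1) with hs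
    set u : A := Φ.symm s with huu
    have hcomp : ∀ (a : A) (I : MaximalSpectrum A),
        Φ a I = Ideal.Quotient.mk I.asIdeal a := fun a I => rfl
    have hΦu : ∀ I : MaximalSpectrum A, Ideal.Quotient.mk I.asIdeal u = s I := by
      intro I
      rw [← hcomp u I, huu, AlgEquiv.apply_symm_apply]
    -- u ≡ 1 mod M, u ≡ 0 mod other maximal ideals
    have hu1 : u - 1 ∈ M := by
      have := hΦu idx
      rw [hs, Pi.single_eq_same] at this
      have : Ideal.Quotient.mk M (u - 1) = 0 := by
        rw [map_sub, this]; simp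
      exact Ideal.Quotient.eq_zero_iff_mem.mp this
    have hu0 : ∀ I : Ideal A, I.IsMaximal → I ≠ M → u ∈ I := by
      intro I hI hne
      have := hΦu ⟨I, hI⟩
      rw [hs, Pi.single_eq_of_ne (by simp [hidx, hne])] at this
      exact Ideal.Quotient.eq_zero_iff_mem.mp this
    -- membership in all maximal ideals means zero
    have hallmax : ∀ z : A, (∀ I : Ideal A, I.IsMaximal → z ∈ I) → z = 0 := by
      intro z hz
      have : z ∈ (⊥ : Ideal A).jacobson := by
        rw [Ideal.jacobson, Ideal.mem_sInf]
        rintro J ⟨-, hJ⟩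
        exact hz J hJ
      rw [hj] at this
      simpa using this
    -- u * e = 0
    have hue : u * e = 0 := by
      refine hallmax _ fun I hI => ?_
      by_cases h : I = M
      · subst h; exact I.mul_mem_left u heM
      · exact I.mul_mem_right e (hu0 I hI h)
    -- u is idempotent
    have hid : u * u = u := by
      have h0 : u * u - u = 0 := by
        refine hallmax _ fun I hI => ?_
        by_cases h : I = M
        · subst h
          have hh : u * u - u = u * (u - 1) := by ring
          rw [hh]; exact I.mul_mem_left u hu1
        · have hh : u * u - u = (u - 1) * u := by ring
          rw [hh]; exact I.mul_mem_left _ (hu0 I hI h)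
      exact sub_eq_zero.mp h0
    -- u ≠ 0
    have hune : u ≠ 0 := by
      intro h0
      rw [h0, zero_sub] at hu1
      exact hM.ne_top (Ideal.eq_top_of_isUnit_mem M hu1 isUnit_one.neg)
    -- the multiplication-by-u map is a projection
    set f : A →ₗ[k] A := LinearMap.mulLeft k u with hf
    have hproj : LinearMap.IsProj (LinearMap.range f) f := by
      constructor
      · intro a; exact LinearMap.mem_range_self f a
      · rintro a ⟨z, rfl⟩
        simp only [hf, LinearMap.mulLeft_apply]
        rw [← mul_assoc, hid]
    -- its trace is the rank of its range, but also B u e = 0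
    have htr1 : LinearMap.trace k A f = (Module.finrank k (LinearMap.range f) : k) :=
      hproj.trace
    have htr2 : LinearMap.trace k A f = 0 := by
      rw [hf, stmt6_aux_trace B x y hinv hdual, ← he, ← hid, hinv, hue, map_zero]
    rw [htr2] at htr1
    have hrk : Module.finrank k (LinearMap.range f) = 0 := by
      exact_mod_cast htr1.symm
    have hbot : LinearMap.range f = ⊥ := Submodule.finrank_eq_zero.mp hrk
    apply hune
    have : u ∈ LinearMap.range f := ⟨1, by simp [hf]⟩
    rw [hbot] at this
    simpa using this
end

section
/- If A is a normalized semi-simple commutative Frobenius algebra, then the 'BV vanishing' degree-one relation holds trivially for the TFT part in the sense that μ ∘ Δ = id, and hence the genus-adding operator (handle operator) has order 1; conversely, if μ ∘ Δ = id on a commutative Frobenius algebra A over an algebraically closed field of characteristic 0, then A is semi-simple and normalized (all λ_i = 1). -/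
open TensorProduct
section aux
variable {k A : Type} [Field k] [IsAlgClosed k] [CommRing A] [Algebra k A]
variable (B : LinearMap.BilinForm k A)
open Module

lemma aux_symm (hinv : ∀ a b c : A, B (a * b) c = B a (b * c)) (x y : A) :
    B x y = B y x := by
  have h1 : B x y = B 1 (x * y) := by simpa using hinv 1 x y
  have h2 : B y x = B 1 (y * x) := by simpa using hinv 1 y x
  rw [h1, h2, mul_comm]

lemma aux_coord {ι : Type} [Fintype ι] [DecidableEq ι] (c : Basis ι k A) (d : ι → A)
    (hd : ∀ i j, B (c i) (d j) = if i = j then 1 else 0)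
    (t : A ⊗[k] A) (i j : ι) :
    ((c.tensorProduct c).repr t) (i, j) = (B.tmul B) t (d i ⊗ₜ[k] d j) := by
  have key : (Finsupp.lapply (i, j) ∘ₗ ((c.tensorProduct c).repr :
        A ⊗[k] A →ₗ[k] ((ι × ι) →₀ k)))
      = (B.tmul B).flip (d i ⊗ₜ[k] d j) := by
    apply (c.tensorProduct c).ext
    rintro ⟨p, q⟩
    simp only [LinearMap.comp_apply, LinearMap.flip_apply, Basis.tensorProduct_apply,
      Basis.tensorProduct_repr_tmul_apply, Basis.repr_self, Finsupp.lapply_apply,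
      Finsupp.single_apply, LinearMap.BilinForm.tensorDistrib_tmul, hd, smul_eq_mul]
    split_ifs <;> simp_all
  simpa using (LinearMap.congr_fun key t)

lemma aux_handle {n : ℕ} (hinv : ∀ a b c : A, B (a * b) c = B a (b * c))
    (D : A →ₗ[k] A ⊗[k] A)
    (hadj : ∀ a x y : A, (B.tmul B) (D a) (x ⊗ₜ[k] y) = B a (x * y))
    (ε : Basis (Fin n) k A)
    (hmul : ∀ i j, ε i * ε j = if i = j then ε i else 0)
    (hl : ∀ i, B (ε i) 1 ≠ 0) (m : Fin n) :
    LinearMap.mul' k A (D (ε m)) = (B (ε m) 1)⁻¹ • ε m := by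
  have hBε : ∀ i j, B (ε i) (ε j) = if i = j then B (ε i) 1 else 0 := by
    intro i j
    have h := hinv (ε i) (ε j) 1
    rw [mul_one] at h
    rw [← h, hmul i j]
    split_ifs <;> simp
  have hd : ∀ i j, B (ε i) ((B (ε j) 1)⁻¹ • ε j) = if i = j then 1 else 0 := by
    intro i j
    rw [map_smul, smul_eq_mul, hBε i j]
    split_ifs with h
    · subst h; exact inv_mul_cancel₀ (hl i)
    · simp
  have hco : ∀ i j, ((ε.tensorProduct ε).repr (D (ε m))) (i, j)
      = if i = m ∧ j = m then (B (ε m) 1)⁻¹ else 0 := by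
    intro i j
    rw [aux_coord B ε _ hd (D (ε m)) i j, hadj]
    rw [smul_mul_smul_comm, map_smul, smul_eq_mul, hmul i j]
    by_cases hij : i = j
    · subst hij
      rw [if_pos rfl, hBε m i]
      by_cases him : i = m
      · subst him
        rw [if_pos rfl, if_pos ⟨rfl, rfl⟩]
        field_simp
      · rw [if_neg (fun hh => him hh.symm), if_neg (fun hh => him hh.1), mul_zero]
    · rw [if_neg hij, map_zero, mul_zero, if_neg (fun hh => hij (hh.1.trans hh.2.symm))]
  have hD : D (ε m) = (B (ε m) 1)⁻¹ • (ε m ⊗ₜ[k] ε m) := by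
    apply (ε.tensorProduct ε).ext_elem
    rintro ⟨i, j⟩
    simp only [hco i j, map_smul, Finsupp.smul_apply, Basis.tensorProduct_repr_tmul_apply,
      Basis.repr_self, Finsupp.single_apply, smul_eq_mul]
    by_cases him : m = i
    · by_cases hjm : m = j
      · subst him; subst hjm; simp
      · have hn : ¬(i = m ∧ j = m) := fun h => hjm h.2.symm
        simp [if_neg hjm, if_neg hn]
    · have hn : ¬(i = m ∧ j = m) := fun h => him h.1.symm
      simp [if_neg him, if_neg hn]
  rw [hD, map_smul, LinearMap.mul'_apply, hmul m m, if_pos rfl]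

lemma aux_Bone_eq_zero {n : ℕ} (hinv : ∀ a b c : A, B (a * b) c = B a (b * c))
    (hnd : ∀ a : A, (∀ b : A, B a b = 0) → a = 0)
    (bA : Basis (Fin n) k A) (D : A →ₗ[k] A ⊗[k] A)
    (hadj : ∀ a x y : A, (B.tmul B) (D a) (x ⊗ₜ[k] y) = B a (x * y))
    (h : ∀ a : A, LinearMap.mul' k A (D a) = a)
    (w : A) (hw : IsNilpotent w) : B w 1 = 0 := by
  haveI : Module.Finite k A := Module.Finite.of_basis bA
  have hB' : B.Nondegenerate := LinearMap.BilinForm.Nondegenerate.ofSeparatingLeft hnd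
  set d := B.dualBasis hB' bA with hdef
  have hd : ∀ i j, B (d i) (bA j) = if i = j then 1 else 0 := by
    intro i j
    rw [hdef, LinearMap.BilinForm.apply_dualBasis_left]
    simp [eq_comm]
  have hrepr : ∀ (x : A) (i : Fin n), d.repr x i = B x (bA i) := fun x i =>
    LinearMap.BilinForm.dualBasis_repr_apply hB' bA x i
  have hDa : ∀ a : A,
      D a = ∑ p : Fin n × Fin n, (B a (bA p.1 * bA p.2)) • (d p.1 ⊗ₜ[k] d p.2) := by
    intro a
    rw [← (d.tensorProduct d).sum_repr (D a)]
    apply Finset.sum_congr rfl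
    rintro ⟨i, j⟩ -
    rw [aux_coord B d bA hd (D a) i j, hadj, Basis.tensorProduct_apply]
  have hkey : ∀ a : A, ∑ p : Fin n × Fin n,
      (B a (bA p.1 * bA p.2)) • (d p.1 * d p.2) = a := by
    intro a
    have h2 := h a
    rw [hDa a, map_sum] at h2
    simpa only [map_smul, LinearMap.mul'_apply] using h2
  have he : ∑ j, bA j * d j = 1 := by
    have h1 := hkey 1
    rw [Fintype.sum_prod_type] at h1
    rw [Finset.sum_comm] at h1
    have hexp : ∀ j, (∑ i, B (bA j) (bA i) • d i) = bA j := by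
      intro j
      conv_rhs => rw [← d.sum_repr (bA j)]
      apply Finset.sum_congr rfl
      intro i _
      rw [hrepr]
    calc ∑ j, bA j * d j
        = ∑ j, (∑ i, B (bA j) (bA i) • d i) * d j := by
          apply Finset.sum_congr rfl
          intro j _
          exact congrArg (· * d j) (hexp j).symm
      _ = ∑ j, ∑ i, (B 1 (bA i * bA j)) • (d i * d j) := by
          apply Finset.sum_congr rfl
          intro j _
          rw [Finset.sum_mul]
          apply Finset.sum_congr rfl
          intro i _
          rw [smul_mul_assoc]
          congr 1
          rw [aux_symm B hinv (bA j) (bA i)]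
          have h3 : B (1 * bA i) (bA j) = B 1 (bA i * bA j) := hinv 1 (bA i) (bA j)
          rw [← h3, one_mul]
      _ = 1 := h1
  -- trace computation
  have htr : LinearMap.trace k A (LinearMap.mulLeft k w) = B w 1 := by
    classical
    rw [LinearMap.trace_eq_matrix_trace k d, Matrix.trace]
    calc ∑ i, (LinearMap.toMatrix d d (LinearMap.mulLeft k w)).diag i
        = ∑ i, B w (bA i * d i) := by
          apply Finset.sum_congr rfl
          intro i _
          rw [Matrix.diag_apply, LinearMap.toMatrix_apply, LinearMap.mulLeft_apply, hrepr,
            hinv w (d i) (bA i), mul_comm (d i) (bA i)]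
      _ = B w (∑ i, bA i * d i) := (map_sum (B w) _ _).symm
      _ = B w 1 := by rw [he]
  obtain ⟨m, hm⟩ := hw
  have hf : IsNilpotent (LinearMap.mulLeft k w) :=
    ⟨m, by rw [LinearMap.pow_mulLeft, hm, LinearMap.mulLeft_zero_eq_zero]⟩
  have h0 := LinearMap.isNilpotent_trace_of_isNilpotent hf
  rw [htr] at h0
  exact h0.eq_zero


lemma aux_struct {n : ℕ} (bA : Basis (Fin n) k A) [IsReduced A] :
    ∃ ε : Basis (Fin n) k A,
      (∀ i j, ε i * ε j = if i = j then ε i else 0) ∧ (∑ i, ε i = 1) := by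
  classical
  haveI : Module.Finite k A := Module.Finite.of_basis bA
  haveI : IsArtinianRing A := isArtinian_of_tower k inferInstance
  haveI : Fintype (MaximalSpectrum A) := Fintype.ofFinite _
  set S := MaximalSpectrum A with hS
  let φ := (IsArtinianRing.equivPi A).toRingEquiv
  have φ_mk : ∀ (x : A) (I : S), φ x I = Ideal.Quotient.mk I.1 x := by
    intro x I
    rfl
  have hsurj : ∀ I : S, Function.Surjective (algebraMap k (A ⧸ I.1)) := by
    intro I
    haveI : I.1.IsMaximal := I.2
    haveI : I.1.IsPrime := I.2.isPrime
    haveI : Module.Finite k (A ⧸ I.1) :=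
      Module.Finite.of_surjective (Ideal.Quotient.mkₐ k I.1).toLinearMap
        Ideal.Quotient.mk_surjective
    exact IsAlgClosed.algebraMap_bijective_of_isIntegral.2
  let φa : A ≃ₐ[k] (∀ I : S, A ⧸ I.1) := AlgEquiv.ofRingEquiv (f := φ) (by
    intro c
    funext I
    rw [φ_mk]
    rfl)
  let εS : S → A := fun I => φa.symm (Pi.single I 1)
  have hmulS : ∀ I J : S, εS I * εS J = if I = J then εS I else 0 := by
    intro I J
    rw [← map_mul]
    by_cases h : I = J
    · subst h
      rw [if_pos rfl]
      congr 1
      funext x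
      rw [Pi.mul_apply]
      by_cases hx : x = I
      · subst hx; simp
      · simp [Pi.single_eq_of_ne hx]
    · rw [if_neg h]
      have : (Pi.single I 1 * Pi.single J 1 : ∀ I : S, A ⧸ I.1) = 0 := by
        funext x
        by_cases hx : x = I
        · subst hx
          simp [Pi.single_apply, Ne.symm h, h]
        · simp [Pi.single_apply, hx]
      rw [this, map_zero]
  have hsumS : ∑ I : S, εS I = 1 := by
    rw [← map_sum, ← map_one φa.symm]
    congr 1
    have := Finset.univ_sum_single (1 : ∀ I : S, A ⧸ I.1)
    simpa using this
  -- the basis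
  let aQ : ∀ I : S, k ≃ₗ[k] (A ⧸ I.1) := fun I =>
    (AlgEquiv.ofBijective (Algebra.ofId k (A ⧸ I.1))
      ⟨by
        haveI : I.1.IsMaximal := I.2
        haveI : I.1.IsPrime := I.2.isPrime
        exact (algebraMap k (A ⧸ I.1)).injective, hsurj I⟩).toLinearEquiv
  let bQ : ∀ I : S, Basis Unit k (A ⧸ I.1) := fun I => (Basis.singleton Unit k).map (aQ I)
  let bigB : Basis (Σ _ : S, Unit) k A := (Pi.basis bQ).map φa.toLinearEquiv.symm
  have hcardS : Fintype.card S = n := by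
    have h1 := Module.finrank_eq_card_basis bigB
    have h2 := Module.finrank_eq_card_basis bA
    rw [h1, Fintype.card_sigma] at h2
    simpa using h2
  let eqvS : S ≃ Fin n := Fintype.equivFinOfCardEq hcardS
  let e1 : (Σ _ : S, Unit) ≃ S := Equiv.sigmaUnique S (fun _ => Unit)
  refine ⟨bigB.reindex (e1.trans eqvS), ?_, ?_⟩
  · intro i j
    have happ : ∀ i, (bigB.reindex (e1.trans eqvS)) i = εS (eqvS.symm i) := by
      intro i
      rw [Basis.reindex_apply]
      have : (e1.trans eqvS).symm i = ⟨eqvS.symm i, ()⟩ := rfl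
      rw [this]
      show φa.toLinearEquiv.symm (Pi.basis bQ ⟨eqvS.symm i, ()⟩) = _
      rw [Pi.basis_apply]
      have : bQ (eqvS.symm i) () = 1 := by
        simp [bQ, aQ, Basis.singleton_apply, Algebra.ofId_apply]
      rw [this]
      rfl
    rw [happ i, happ j, hmulS]
    by_cases h : i = j
    · subst h; simp
    · rw [if_neg h, if_neg (fun hc => h (by
        have := congrArg eqvS hc
        simpa using this))]
  · have happ : ∀ i, (bigB.reindex (e1.trans eqvS)) i = εS (eqvS.symm i) := by
      intro i
      rw [Basis.reindex_apply]
      have : (e1.trans eqvS).symm i = ⟨eqvS.symm i, ()⟩ := rfl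
      rw [this]
      show φa.toLinearEquiv.symm (Pi.basis bQ ⟨eqvS.symm i, ()⟩) = _
      rw [Pi.basis_apply]
      have : bQ (eqvS.symm i) () = 1 := by
        simp [bQ, aQ, Basis.singleton_apply, Algebra.ofId_apply]
      rw [this]
      rfl
    calc ∑ i, (bigB.reindex (e1.trans eqvS)) i = ∑ i, εS (eqvS.symm i) := by
          exact Finset.sum_congr rfl fun i _ => happ i
      _ = ∑ I, εS I := Equiv.sum_comp eqvS.symm εS
      _ = 1 := hsumS
end aux

open TensorProduct in
/-- For a commutative Frobenius algebra over an algebraically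
closed field of characteristic 0, with comultiplication `Δ` adjoint to the
multiplication `μ` (so `μ ∘ Δ` is the handle operator, multiplication by the
Euler element): if `A` is normalized semi-simple (idempotent basis `ε` with
`⟨εᵢ,1⟩ = 1`), then `μ ∘ Δ = id`; conversely, if `μ ∘ Δ = id`, then `A` is
semi-simple (zero Jacobson radical) and normalized. -/
theorem stmt_19 {k A : Type} [Field k] [IsAlgClosed k] [CharZero k]
    [CommRing A] [Algebra k A]
    (B : LinearMap.BilinForm k A)
    (hinv : ∀ a b c : A, B (a * b) c = B a (b * c))
    (hnd : ∀ a : A, (∀ b : A, B a b = 0) → a = 0)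
    {n : ℕ} (bA : Module.Basis (Fin n) k A)
    (D : A →ₗ[k] A ⊗[k] A)
    (hadj : ∀ a x y : A, (B.tmul B) (D a) (x ⊗ₜ[k] y) = B a (x * y)) :
    ((∃ ε : Module.Basis (Fin n) k A,
        (∀ i j, ε i * ε j = if i = j then ε i else 0) ∧
        (∑ i, ε i = 1) ∧ (∀ i, B (ε i) 1 = 1)) →
      ∀ a : A, LinearMap.mul' k A (D a) = a) ∧
    ((∀ a : A, LinearMap.mul' k A (D a) = a) →
      ((⊥ : Ideal A).jacobson = ⊥ ∧
        ∃ ε : Module.Basis (Fin n) k A,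
          (∀ i j, ε i * ε j = if i = j then ε i else 0) ∧
          (∑ i, ε i = 1) ∧ (∀ i, B (ε i) 1 = 1))) := by
  constructor
  · rintro ⟨ε, hmul, hsum, hlam⟩ a
    have key : (LinearMap.mul' k A).comp D = LinearMap.id := by
      apply Module.Basis.ext ε
      intro m
      simp only [LinearMap.comp_apply, LinearMap.id_apply]
      rw [aux_handle B hinv D hadj ε hmul (fun i => by rw [hlam i]; exact one_ne_zero) m,
        hlam m]
      simp
    simpa using LinearMap.congr_fun key a
  · intro h
    have hnil : ∀ w : A, IsNilpotent w → w = 0 := by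
      intro w hw
      apply hnd
      intro x
      have hwx : IsNilpotent (w * x) := by
        obtain ⟨m, hm⟩ := hw
        exact ⟨m, by rw [mul_pow, hm, zero_mul]⟩
      have h3 := aux_Bone_eq_zero B hinv hnd bA D hadj h (w * x) hwx
      have h4 := hinv w x 1
      rw [mul_one] at h4
      rw [← h4]
      exact h3
    constructor
    · haveI : Module.Finite k A := Module.Finite.of_basis bA
      haveI : IsArtinianRing A := isArtinian_of_tower k inferInstance
      refine le_antisymm ?_ bot_le
      intro r hr
      obtain ⟨m, hm⟩ := IsArtinianRing.isNilpotent_jacobson_bot (R := A)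
      have h5 : r ^ m ∈ ((⊥ : Ideal A).jacobson) ^ m := Ideal.pow_mem_pow hr m
      rw [hm] at h5
      have h6 : IsNilpotent r := ⟨m, by simpa using h5⟩
      simpa using hnil r h6
    · haveI : IsReduced A := (isReduced_iff A).mpr hnil
      obtain ⟨ε, hmul, hsum⟩ := aux_struct bA
      refine ⟨ε, hmul, hsum, ?_⟩
      intro i
      have hlne : ∀ m, B (ε m) 1 ≠ 0 := by
        intro m h0
        have hz : ∀ x, B (ε m) x = 0 := by
          intro x
          rw [← Module.Basis.sum_repr ε x, map_sum]
          apply Finset.sum_eq_zero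
          intro j _
          rw [map_smul, smul_eq_mul]
          have hB := hinv (ε m) (ε j) 1
          rw [mul_one] at hB
          rw [← hB, hmul m j]
          split_ifs with hmj
          · subst hmj; rw [h0, mul_zero]
          · simp
        exact absurd (hnd _ hz) (ε.ne_zero m)
      have hh := aux_handle B hinv D hadj ε hmul hlne i
      rw [h (ε i)] at hh
      have h5 : ((B (ε i) 1)⁻¹ - 1) • ε i = 0 := by
        rw [sub_smul, one_smul, ← hh, sub_self]
      rcases smul_eq_zero.mp h5 with h6 | h6
      · exact inv_eq_one.mp (sub_eq_zero.mp h6)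
      · exact absurd h6 (ε.ne_zero i)
end
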